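/- (Matrix form of Theorem 2.3.) Let N ≥ L ≥ 1, let T > 0 and 0 < μ_1 ≤ μ_2 ≤ ... ≤ μ_L. Let Φ be a real N × L matrix with orthonormal columns (Φᵀ Φ = I_L), let F be an invertible diagonal L × L matrix, let D = diag(d_1, ..., d_L) with d_i = (1 − exp(−μ_i T)) / μ_i, and let J be an invertible L × L real matrix. Set A = Φ F J and Ã = Φ D F J, with columns y_1, ..., y_L and ỹ_1, ..., ỹ_L respectively (viewed as vectors in Euclidean space ℝ^N). Let V be a linear subspace of ℝ^N and let P denote the orthogonal projection onto V. Then (Σ_{j=1}^{L} ‖y_j − P y_j‖²) · (Σ_{j=1}^{L} ‖ỹ_j‖²) ≤ L · ‖J‖₂² · ‖J⁻¹‖₂² · T² · μ_L² / (1 − exp(−μ_1 T))² · (Σ_{j=1}^{L} ‖ỹ_j − P ỹ_j‖²) · (Σ_{j=1}^{L} ‖y_j‖²). -/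

import Mathlib

set_option autoImplicit false
set_option synthInstance.maxHeartbeats 1000000
set_option maxHeartbeats 2000000

open Matrix

lemma pod_euclid_norm_sq {n : ℕ} (x : EuclideanSpace ℝ (Fin n)) : ‖x‖ ^ 2 = ∑ i, (x i) ^ 2 := by
  rw [PiLp.norm_sq_eq_of_L2]
  simp [sq_abs]

lemma pod_clm_apply {L : ℕ} (M : Matrix (Fin L) (Fin L) ℝ) (x : EuclideanSpace ℝ (Fin L))
    (j : Fin L) : (Matrix.toEuclideanCLM (𝕜 := ℝ) M x) j = ∑ k, M j k * x k := rfl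

lemma pod_clm_transpose_norm {L : ℕ} (M : Matrix (Fin L) (Fin L) ℝ) :
    ‖Matrix.toEuclideanCLM (𝕜 := ℝ) Mᵀ‖ = ‖Matrix.toEuclideanCLM (𝕜 := ℝ) M‖ := by
  have h : Mᵀ = star M := by
    ext i j; simp [Matrix.star_eq_conjTranspose, Matrix.conjTranspose_apply]
  rw [h, map_star, ContinuousLinearMap.star_eq_adjoint]
  exact ContinuousLinearMap.adjoint.norm_map _

lemma pod_sum_sq_mulVec_le {L : ℕ} (M : Matrix (Fin L) (Fin L) ℝ) (x : EuclideanSpace ℝ (Fin L)) :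
    ∑ j, (∑ k, M j k * x k) ^ 2 ≤ ‖Matrix.toEuclideanCLM (𝕜 := ℝ) M‖ ^ 2 * ∑ k, (x k) ^ 2 := by
  have h := (Matrix.toEuclideanCLM (𝕜 := ℝ) M).le_opNorm x
  have h2 : ‖Matrix.toEuclideanCLM (𝕜 := ℝ) M x‖ ^ 2 ≤
      (‖Matrix.toEuclideanCLM (𝕜 := ℝ) M‖ * ‖x‖) ^ 2 :=
    pow_le_pow_left₀ (norm_nonneg _) h 2
  rw [pod_euclid_norm_sq, mul_pow, pod_euclid_norm_sq] at h2
  simpa [pod_clm_apply] using h2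

/-- Transfer of sums of squared norms through a matrix of coefficients. -/
lemma pod_transfer {N L : ℕ} (M : Matrix (Fin L) (Fin L) ℝ)
    (v : Fin L → EuclideanSpace ℝ (Fin N)) :
    ∑ j, ‖∑ k, M k j • v k‖ ^ 2 ≤
      ‖Matrix.toEuclideanCLM (𝕜 := ℝ) Mᵀ‖ ^ 2 * ∑ k, ‖v k‖ ^ 2 := by
  have happ : ∀ (j : Fin L) (i : Fin N), (∑ k, M k j • v k) i = ∑ k, M k j * v k i := by
    intro j i
    exact map_sum (EuclideanSpace.proj (𝕜 := ℝ) i) (fun k => M k j • v k) Finset.univ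
  calc ∑ j, ‖∑ k, M k j • v k‖ ^ 2
      = ∑ j, ∑ i, (∑ k, M k j * v k i) ^ 2 := by
        simp_rw [pod_euclid_norm_sq, happ]
    _ = ∑ i, ∑ j, (∑ k, Mᵀ j k * ((WithLp.equiv 2 (Fin L → ℝ)).symm fun k => v k i) k) ^ 2 := by
        rw [Finset.sum_comm]
        rfl
    _ ≤ ∑ i : Fin N, ‖Matrix.toEuclideanCLM (𝕜 := ℝ) Mᵀ‖ ^ 2 *
          ∑ k, (((WithLp.equiv 2 (Fin L → ℝ)).symm fun k => v k i) k) ^ 2 :=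
        Finset.sum_le_sum fun i _ => pod_sum_sq_mulVec_le Mᵀ _
    _ = ‖Matrix.toEuclideanCLM (𝕜 := ℝ) Mᵀ‖ ^ 2 * ∑ k, ‖v k‖ ^ 2 := by
        rw [← Finset.mul_sum, Finset.sum_comm]
        simp_rw [pod_euclid_norm_sq]
        rfl

lemma pod_diag_norm_le {L : ℕ} (g : Fin L → ℝ) (c : ℝ) (hc : 0 ≤ c) (h : ∀ k, |g k| ≤ c) :
    ‖Matrix.toEuclideanCLM (𝕜 := ℝ) (Matrix.diagonal g)‖ ≤ c := by
  refine ContinuousLinearMap.opNorm_le_bound _ hc fun x => ?_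
  have hsq : ‖Matrix.toEuclideanCLM (𝕜 := ℝ) (Matrix.diagonal g) x‖ ^ 2 ≤ (c * ‖x‖) ^ 2 := by
    rw [pod_euclid_norm_sq, mul_pow, pod_euclid_norm_sq, Finset.mul_sum]
    refine Finset.sum_le_sum fun j _ => ?_
    rw [pod_clm_apply]
    have : ∑ k, Matrix.diagonal g j k * x k = g j * x j := by
      simp [Matrix.diagonal_apply]
    rw [this, mul_pow]
    have : (g j) ^ 2 ≤ c ^ 2 := by
      have := h j
      nlinarith [abs_nonneg (g j), sq_abs (g j)]
    nlinarith [sq_nonneg (x j)]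
  nlinarith [norm_nonneg (Matrix.toEuclideanCLM (𝕜 := ℝ) (Matrix.diagonal g) x),
    mul_nonneg hc (norm_nonneg x)]

/-- Matrix form of Theorem 2.3 (inverse source problem): with
`D = diag((1 − exp(−μ_i T))/μ_i)`, `A = Φ F J`, `Ã = Φ D F J`, and `P` the orthogonal
projection onto a subspace `V ⊆ ℝ^N`:
`(Σ_j ‖y_j − P y_j‖²)(Σ_j ‖ỹ_j‖²) ≤ L ‖J‖₂² ‖J⁻¹‖₂² T² μ_L² / (1 − exp(−μ_1 T))²
  (Σ_j ‖ỹ_j − P ỹ_j‖²)(Σ_j ‖y_j‖²)`. -/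
theorem pod_projection_transfer_source (N L : ℕ) (hL : 1 ≤ L) (hLN : L ≤ N)
    (T : ℝ) (hT : 0 < T) (μ : Fin L → ℝ) (hμmono : Monotone μ)
    (hμpos : 0 < μ ⟨0, by omega⟩)
    (Φ : Matrix (Fin N) (Fin L) ℝ) (hΦ : Φᵀ * Φ = 1)
    (f : Fin L → ℝ) (hf : ∀ i, f i ≠ 0)
    (J : Matrix (Fin L) (Fin L) ℝ) (hJ : IsUnit J)
    (A Atil : Matrix (Fin N) (Fin L) ℝ)
    (hA : A = Φ * Matrix.diagonal f * J)
    (hAtil : Atil = Φ * Matrix.diagonal (fun i => (1 - Real.exp (-μ i * T)) / μ i) *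
      Matrix.diagonal f * J)
    (y ytil : Fin L → EuclideanSpace ℝ (Fin N))
    (hy : ∀ j i, y j i = A i j) (hytil : ∀ j i, ytil j i = Atil i j)
    (V : Submodule ℝ (EuclideanSpace ℝ (Fin N))) :
    (∑ j, ‖y j - (Submodule.orthogonalProjection V (y j) : EuclideanSpace ℝ (Fin N))‖ ^ 2) *
        (∑ j, ‖ytil j‖ ^ 2) ≤
      (L : ℝ) * ‖Matrix.toEuclideanCLM (𝕜 := ℝ) J‖ ^ 2 *
        ‖Matrix.toEuclideanCLM (𝕜 := ℝ) J⁻¹‖ ^ 2 * T ^ 2 * (μ ⟨L - 1, by omega⟩) ^ 2 /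
        (1 - Real.exp (-μ ⟨0, by omega⟩ * T)) ^ 2 *
        (∑ j, ‖ytil j - (Submodule.orthogonalProjection V (ytil j) : EuclideanSpace ℝ (Fin N))‖ ^ 2) *
        (∑ j, ‖y j‖ ^ 2) := by
  classical
  set d : Fin L → ℝ := fun i => (1 - Real.exp (-μ i * T)) / μ i with hd
  -- basic facts about μ and d
  have hμk : ∀ k, 0 < μ k := fun k =>
    lt_of_lt_of_le hμpos (hμmono (by simp [Fin.le_def]))
  have hek : ∀ k, Real.exp (-μ k * T) < 1 := fun k => by
    have := hμk k
    rw [← Real.exp_zero]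
    apply Real.exp_lt_exp.mpr
    nlinarith
  have hdpos : ∀ k, 0 < d k := fun k => div_pos (by linarith [hek k]) (hμk k)
  have hdT : ∀ k, d k ≤ T := fun k => by
    rw [hd, div_le_iff₀ (hμk k)]
    have := Real.add_one_le_exp (-μ k * T)
    nlinarith [hμk k]
  have hden : 0 < 1 - Real.exp (-μ ⟨0, hL⟩ * T) := by linarith [hek ⟨0, hL⟩]
  set c : ℝ := μ ⟨L - 1, by omega⟩ / (1 - Real.exp (-μ ⟨0, hL⟩ * T)) with hc
  have hcpos : 0 < c := div_pos (hμk _) hden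
  have hdinv : ∀ k, (d k)⁻¹ ≤ c := fun k => by
    rw [hd, hc]
    simp only [inv_div]
    apply div_le_div₀ (le_of_lt (hμk _)) (hμmono (by simp [Fin.le_def]; omega)) hden
    have : Real.exp (-μ k * T) ≤ Real.exp (-μ ⟨0, hL⟩ * T) := by
      apply Real.exp_le_exp.mpr
      have : μ ⟨0, hL⟩ ≤ μ k := hμmono (by simp [Fin.le_def])
      nlinarith
    linarith
  -- matrices
  set D : Matrix (Fin L) (Fin L) ℝ := Matrix.diagonal d with hD
  set Dinv : Matrix (Fin L) (Fin L) ℝ := Matrix.diagonal (fun k => (d k)⁻¹) with hDinv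
  set M : Matrix (Fin L) (Fin L) ℝ := J⁻¹ * Dinv * J with hM
  have hJJ : J * J⁻¹ = 1 := Matrix.mul_nonsing_inv J ((Matrix.isUnit_iff_isUnit_det J).mp hJ)
  have hdf : D * (Matrix.diagonal f * (Dinv * J)) = Matrix.diagonal f * J := by
    ext i j
    rw [hD, hDinv, Matrix.diagonal_mul, Matrix.diagonal_mul, Matrix.diagonal_mul,
      Matrix.diagonal_mul]
    have h : d i * (f i * ((d i)⁻¹ * J i j)) = (d i * (d i)⁻¹) * (f i * J i j) := by ring
    rw [h, mul_inv_cancel₀ (ne_of_gt (hdpos i)), one_mul]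
  have hAM : A = Atil * M := by
    rw [hA, hAtil, hM]
    simp only [Matrix.mul_assoc]
    rw [← Matrix.mul_assoc J J⁻¹ (Dinv * J), hJJ, Matrix.one_mul, hdf]
  -- y j as combination of ytil k
  have hyc : ∀ j, y j = ∑ k, M k j • ytil k := by
    intro j
    apply (WithLp.equiv 2 (Fin N → ℝ)).injective
    funext i
    have h1 : (∑ k, M k j • ytil k) i = ∑ k, M k j * ytil k i :=
      map_sum (EuclideanSpace.proj (𝕜 := ℝ) i) (fun k => M k j • ytil k) Finset.univ
    show y j i = (∑ k, M k j • ytil k) i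
    rw [h1, hy, hAM, Matrix.mul_apply]
    simp_rw [hytil]
    exact Finset.sum_congr rfl fun k _ => mul_comm _ _
  -- the projection complement as a CLM
  set Q : EuclideanSpace ℝ (Fin N) →L[ℝ] EuclideanSpace ℝ (Fin N) :=
    ContinuousLinearMap.id ℝ _ - V.subtypeL.comp (Submodule.orthogonalProjection V) with hQ
  have hQapp : ∀ x : EuclideanSpace ℝ (Fin N),
      Q x = x - (Submodule.orthogonalProjection V x : EuclideanSpace ℝ (Fin N)) := fun x => rfl
  -- norm bound for M transpose
  have hMt : Mᵀ = Jᵀ * (Dinv * (J⁻¹)ᵀ) := by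
    rw [hM, Matrix.transpose_mul, Matrix.transpose_mul, hDinv, Matrix.diagonal_transpose]
  set K : ℝ := ‖Matrix.toEuclideanCLM (𝕜 := ℝ) J‖ * c * ‖Matrix.toEuclideanCLM (𝕜 := ℝ) J⁻¹‖
    with hK
  have hKnonneg : 0 ≤ K :=
    mul_nonneg (mul_nonneg (norm_nonneg _) (le_of_lt hcpos)) (norm_nonneg _)
  have hMnorm : ‖Matrix.toEuclideanCLM (𝕜 := ℝ) Mᵀ‖ ≤ K := by
    rw [hMt, _root_.map_mul, _root_.map_mul]
    calc ‖Matrix.toEuclideanCLM (𝕜 := ℝ) Jᵀ * (Matrix.toEuclideanCLM (𝕜 := ℝ) Dinv *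
            Matrix.toEuclideanCLM (𝕜 := ℝ) (J⁻¹)ᵀ)‖
        ≤ ‖Matrix.toEuclideanCLM (𝕜 := ℝ) Jᵀ‖ * ‖Matrix.toEuclideanCLM (𝕜 := ℝ) Dinv *
            Matrix.toEuclideanCLM (𝕜 := ℝ) (J⁻¹)ᵀ‖ := norm_mul_le _ _
      _ ≤ ‖Matrix.toEuclideanCLM (𝕜 := ℝ) Jᵀ‖ * (‖Matrix.toEuclideanCLM (𝕜 := ℝ) Dinv‖ *
            ‖Matrix.toEuclideanCLM (𝕜 := ℝ) (J⁻¹)ᵀ‖) := by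
          apply mul_le_mul_of_nonneg_left (norm_mul_le _ _) (norm_nonneg _)
      _ ≤ K := by
          rw [hK, pod_clm_transpose_norm, pod_clm_transpose_norm, mul_assoc]
          apply mul_le_mul_of_nonneg_left ?_ (norm_nonneg _)
          apply mul_le_mul_of_nonneg_right ?_ (norm_nonneg _)
          apply pod_diag_norm_le _ _ (le_of_lt hcpos)
          intro k
          rw [abs_of_pos (inv_pos.mpr (hdpos k))]
          exact hdinv k
  -- Claim A
  have hS1 : ∑ j, ‖y j - (Submodule.orthogonalProjection V (y j) : EuclideanSpace ℝ (Fin N))‖ ^ 2 ≤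
      K ^ 2 * ∑ k, ‖ytil k - (Submodule.orthogonalProjection V (ytil k) : EuclideanSpace ℝ (Fin N))‖ ^ 2 := by
    have h1 : ∀ j, y j - (Submodule.orthogonalProjection V (y j) : EuclideanSpace ℝ (Fin N)) =
        ∑ k, M k j • (ytil k - (Submodule.orthogonalProjection V (ytil k) : EuclideanSpace ℝ (Fin N))) := by
      intro j
      rw [← hQapp, hyc j, map_sum]
      exact Finset.sum_congr rfl fun k _ => by rw [_root_.map_smul, hQapp]
    calc ∑ j, ‖y j - (Submodule.orthogonalProjection V (y j) : EuclideanSpace ℝ (Fin N))‖ ^ 2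
        = ∑ j, ‖∑ k, M k j •
            (ytil k - (Submodule.orthogonalProjection V (ytil k) : EuclideanSpace ℝ (Fin N)))‖ ^ 2 := by
          simp_rw [h1]
      _ ≤ ‖Matrix.toEuclideanCLM (𝕜 := ℝ) Mᵀ‖ ^ 2 *
            ∑ k, ‖ytil k - (Submodule.orthogonalProjection V (ytil k) : EuclideanSpace ℝ (Fin N))‖ ^ 2 :=
          pod_transfer M _
      _ ≤ K ^ 2 * _ := by
          apply mul_le_mul_of_nonneg_right (pow_le_pow_left₀ (norm_nonneg _) hMnorm 2)
          positivity
  -- column norms through Φ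
  have hcol : ∀ (B : Matrix (Fin L) (Fin L) ℝ) (j : Fin L),
      ∑ i, ((Φ * B) i j) ^ 2 = ∑ k, (B k j) ^ 2 := by
    intro B j
    have h : (Φ * B)ᵀ * (Φ * B) = Bᵀ * B := by
      rw [Matrix.transpose_mul, Matrix.mul_assoc, ← Matrix.mul_assoc Φᵀ Φ B, hΦ,
        Matrix.one_mul]
    have h2 := congrFun (congrFun h j) j
    simp only [Matrix.mul_apply, Matrix.transpose_apply] at h2
    simpa [sq, Matrix.mul_apply] using h2
  -- Claim B
  have hS2 : ∑ j, ‖ytil j‖ ^ 2 ≤ T ^ 2 * ∑ j, ‖y j‖ ^ 2 := by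
    have hAtil' : Atil = Φ * (D * Matrix.diagonal f * J) := by
      rw [hAtil, hD]; simp only [Matrix.mul_assoc]
    have hA' : A = Φ * (Matrix.diagonal f * J) := by
      rw [hA]; simp only [Matrix.mul_assoc]
    rw [Finset.mul_sum]
    apply Finset.sum_le_sum
    intro j _
    rw [pod_euclid_norm_sq, pod_euclid_norm_sq]
    simp_rw [hytil, hy, hAtil', hA']
    rw [hcol (D * Matrix.diagonal f * J) j, hcol (Matrix.diagonal f * J) j, Finset.mul_sum]
    apply Finset.sum_le_sum
    intro k _
    have hDFJ : (D * Matrix.diagonal f * J) k j = d k * ((Matrix.diagonal f * J) k j) := by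
      rw [hD, Matrix.mul_assoc, Matrix.diagonal_mul]
    rw [hDFJ, mul_pow]
    have h1 : (d k) ^ 2 ≤ T ^ 2 := by nlinarith [hdpos k, hdT k]
    nlinarith [sq_nonneg ((Matrix.diagonal f * J) k j)]
  -- assemble
  have hS3nonneg : 0 ≤ ∑ j, ‖ytil j - (Submodule.orthogonalProjection V (ytil j) :
      EuclideanSpace ℝ (Fin N))‖ ^ 2 := by positivity
  have hS4nonneg : 0 ≤ ∑ j, ‖y j‖ ^ 2 := by positivity
  have hS2nonneg : 0 ≤ ∑ j, ‖ytil j‖ ^ 2 := by positivity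
  have hS1nonneg : 0 ≤ ∑ j, ‖y j - (Submodule.orthogonalProjection V (y j) :
      EuclideanSpace ℝ (Fin N))‖ ^ 2 := by positivity
  have hCeq : (L : ℝ) * ‖Matrix.toEuclideanCLM (𝕜 := ℝ) J‖ ^ 2 *
      ‖Matrix.toEuclideanCLM (𝕜 := ℝ) J⁻¹‖ ^ 2 * T ^ 2 * (μ ⟨L - 1, by omega⟩) ^ 2 /
      (1 - Real.exp (-μ ⟨0, by omega⟩ * T)) ^ 2 = (L : ℝ) * (K ^ 2 * T ^ 2) := by
    rw [hK, hc]
    field_simp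
  rw [hCeq]
  have hL1 : (1 : ℝ) ≤ (L : ℝ) := by exact_mod_cast hL
  calc (∑ j, ‖y j - (Submodule.orthogonalProjection V (y j) : EuclideanSpace ℝ (Fin N))‖ ^ 2) *
        (∑ j, ‖ytil j‖ ^ 2)
      ≤ (K ^ 2 * ∑ j, ‖ytil j - (Submodule.orthogonalProjection V (ytil j) :
          EuclideanSpace ℝ (Fin N))‖ ^ 2) * (T ^ 2 * ∑ j, ‖y j‖ ^ 2) :=
        mul_le_mul hS1 hS2 hS2nonneg (by positivity)
    _ ≤ (L : ℝ) * (K ^ 2 * T ^ 2) *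
          (∑ j, ‖ytil j - (Submodule.orthogonalProjection V (ytil j) : EuclideanSpace ℝ (Fin N))‖ ^ 2) *
          (∑ j, ‖y j‖ ^ 2) := by
        nlinarith [mul_nonneg hS3nonneg hS4nonneg, sq_nonneg K, sq_nonneg T,
          mul_nonneg (mul_nonneg (sq_nonneg K) (sq_nonneg T))
            (mul_nonneg hS3nonneg hS4nonneg)]
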